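/- Given any SMC instance I on n men and n women, there exists an optimal stable fractional matching for I that assigns positive weight to at most 4n man-woman pairs, and hence admits a support consisting of at most 4n integral matchings. -/

import Mathlib

open Finset

/-- A fractional matching: nonnegative weights with row and column sums at most 1. -/
def IsFrac {n : ℕ} (μ : Fin n → Fin n → ℝ) : Prop :=
  (∀ m w, 0 ≤ μ m w) ∧ (∀ m, ∑ w, μ m w ≤ 1) ∧ (∀ w, ∑ m, μ m w ≤ 1)

/-- An integral matching takes values in {0,1}. -/
def IsIntegralM {n : ℕ} (μ : Fin n → Fin n → ℝ) : Prop :=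
  ∀ m w, μ m w = 0 ∨ μ m w = 1

/-- A complete (perfect) matching: all row and column sums equal 1. -/
def IsPerfect {n : ℕ} (μ : Fin n → Fin n → ℝ) : Prop :=
  (∀ m, ∑ w, μ m w = 1) ∧ (∀ w, ∑ m, μ m w = 1)

/-- Utility of man `m` under matching `μ`. -/
def uM {n : ℕ} (U μ : Fin n → Fin n → ℝ) (m : Fin n) : ℝ := ∑ w, U m w * μ m w

/-- Utility of woman `w` under matching `μ`. -/
def vW {n : ℕ} (V μ : Fin n → Fin n → ℝ) (w : Fin n) : ℝ := ∑ m, V m w * μ m w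

/-- Stability: no blocking pair. -/
def IsStable {n : ℕ} (U V μ : Fin n → Fin n → ℝ) : Prop :=
  ∀ m w, U m w ≤ uM U μ m ∨ V m w ≤ vW V μ w

/-- Social welfare. -/
def welfare {n : ℕ} (U V μ : Fin n → Fin n → ℝ) : ℝ :=
  (∑ m, uM U μ m) + (∑ w, vW V μ w)

namespace SMCb
variable {n : ℕ}

-- continuity facts
lemma cont_uM (U : Fin n → Fin n → ℝ) (m : Fin n) :
    Continuous (fun μ : Fin n → Fin n → ℝ => ∑ w, U m w * μ m w) := by
  apply continuous_finset_sum
  intro w _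
  exact continuous_const.mul ((continuous_apply w).comp (continuous_apply m))

lemma cont_vW (V : Fin n → Fin n → ℝ) (w : Fin n) :
    Continuous (fun μ : Fin n → Fin n → ℝ => ∑ m, V m w * μ m w) := by
  apply continuous_finset_sum
  intro m _
  exact continuous_const.mul ((continuous_apply w).comp (continuous_apply m))

lemma cont_row (m : Fin n) : Continuous (fun μ : Fin n → Fin n → ℝ => ∑ w, μ m w) := by
  apply continuous_finset_sum
  intro w _
  exact (continuous_apply w).comp (continuous_apply m)

lemma cont_col (w : Fin n) : Continuous (fun μ : Fin n → Fin n → ℝ => ∑ m, μ m w) := by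
  apply continuous_finset_sum
  intro m _
  exact (continuous_apply w).comp (continuous_apply m)

-- the kernel vector lemma
lemma exists_kernel_vec (hn : 0 < n) (U V : Fin n → Fin n → ℝ)
    (S : Finset (Fin n × Fin n)) (hS : 4 * n ≤ S.card) :
    ∃ Z : Fin n → Fin n → ℝ, Z ≠ 0 ∧ (∀ m w, (m, w) ∉ S → Z m w = 0) ∧
      (∀ m, ∑ w, Z m w = 0) ∧ (∀ w, ∑ m, Z m w = 0) ∧
      (∀ m, ∑ w, U m w * Z m w = 0) ∧ (∀ w, ∑ m, V m w * Z m w = 0) := by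
  classical
  set ext : (↥S → ℝ) → (Fin n → Fin n → ℝ) :=
    fun z m w => if h : ((m, w) : Fin n × Fin n) ∈ S then z ⟨(m, w), h⟩ else 0 with hext
  have ext_add : ∀ (a b : ↥S → ℝ) m w, ext (a + b) m w = ext a m w + ext b m w := by
    intro a b m w
    by_cases h : ((m, w) : Fin n × Fin n) ∈ S <;> simp [ext, h]
  have ext_smul : ∀ (c : ℝ) (a : ↥S → ℝ) m w, ext (c • a) m w = c * ext a m w := by
    intro c a m w
    by_cases h : ((m, w) : Fin n × Fin n) ∈ S <;> simp [ext, h]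
  set T : (↥S → ℝ) →ₗ[ℝ] ((Fin n → ℝ) × (Fin n → ℝ) × (Fin n → ℝ) × (Fin n → ℝ)) :=
    { toFun := fun z => (fun m => ∑ w, ext z m w, fun w => ∑ m, ext z m w,
        fun m => ∑ w, U m w * ext z m w, fun w => ∑ m, V m w * ext z m w)
      map_add' := by
        intro a b
        refine Prod.ext ?_ (Prod.ext ?_ (Prod.ext ?_ ?_)) <;> funext i <;>
          simp [ext_add, Finset.sum_add_distrib, mul_add, Prod.fst_add, Prod.snd_add, Pi.add_apply]
      map_smul' := by
        intro c a
        refine Prod.ext ?_ (Prod.ext ?_ (Prod.ext ?_ ?_)) <;> funext i <;>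
          simp [ext_smul, Finset.mul_sum, mul_left_comm, Prod.smul_fst, Prod.smul_snd, Pi.smul_apply, smul_eq_mul] } with hT
  set φ : ((Fin n → ℝ) × (Fin n → ℝ) × (Fin n → ℝ) × (Fin n → ℝ)) →ₗ[ℝ] ℝ :=
    { toFun := fun x => (∑ m, x.1 m) - (∑ w, x.2.1 w)
      map_add' := by intro a b; simp [Finset.sum_add_distrib]; ring
      map_smul' := by intro c a; simp [mul_sub]; rw [Finset.mul_sum, Finset.mul_sum] } with hφ
  have hrange : ∀ z, T z ∈ LinearMap.ker φ := by
    intro z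
    simp only [LinearMap.mem_ker, hT, hφ, LinearMap.coe_mk, AddHom.coe_mk]
    rw [sub_eq_zero]
    exact Finset.sum_comm
  have hsurj : Function.Surjective φ := by
    intro c
    refine ⟨(fun _ => c / n, 0, 0, 0), ?_⟩
    simp only [hφ, LinearMap.coe_mk, AddHom.coe_mk]
    simp only [Finset.sum_const, card_univ, Fintype.card_fin, nsmul_eq_mul, Pi.zero_apply,
      Finset.sum_const_zero, sub_zero]
    field_simp
    simp
  have hkerdim : Module.finrank ℝ ↥(LinearMap.ker φ) = 4 * n - 1 := by
    have h1 := LinearMap.finrank_range_add_finrank_ker φ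
    have h2 : Module.finrank ℝ ↥(LinearMap.range φ) = 1 := by
      rw [LinearMap.range_eq_top.2 hsurj]
      simp
    have h3 : Module.finrank ℝ ((Fin n → ℝ) × (Fin n → ℝ) × (Fin n → ℝ) × (Fin n → ℝ)) = 4 * n := by
      rw [Module.finrank_prod, Module.finrank_prod, Module.finrank_prod]
      simp [Module.finrank_pi]
      ring
    omega
  have hnotinj : ¬ Function.Injective (T.codRestrict (LinearMap.ker φ) hrange) := by
    intro hinj
    have := LinearMap.finrank_le_finrank_of_injective hinj
    rw [hkerdim] at this
    have hdom : Module.finrank ℝ (↥S → ℝ) = S.card := by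
      rw [Module.finrank_pi]
      simp
    rw [hdom] at this
    omega
  obtain ⟨a, b, hab, hne⟩ := Function.not_injective_iff.1 hnotinj
  set z := a - b with hz
  have hz0 : z ≠ 0 := sub_ne_zero.2 hne
  have hTz : T z = 0 := by
    have : T.codRestrict (LinearMap.ker φ) hrange z = 0 := by
      rw [hz, map_sub, hab, sub_self]
    have h2 := congrArg (Subtype.val) this
    simpa [LinearMap.codRestrict] using h2
  refine ⟨ext z, ?_, ?_, ?_, ?_, ?_, ?_⟩
  · intro hZ
    apply hz0
    funext p
    have h1 : ext z p.1.1 p.1.2 = 0 := by rw [hZ]; rfl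
    have hmem : ((p.1.1, p.1.2) : Fin n × Fin n) ∈ S := by rw [Prod.mk.eta]; exact p.2
    have h2 : ext z p.1.1 p.1.2 = z p := by
      simp only [hext]
      rw [dif_pos hmem]
    rw [h2] at h1
    exact h1
  · intro m w h
    simp [ext, h]
  · intro m; exact congrFun (congrArg Prod.fst hTz) m
  · intro w; exact congrFun (congrArg (fun x => x.2.1) hTz) w
  · intro m; exact congrFun (congrArg (fun x => x.2.2.1) hTz) m
  · intro w; exact congrFun (congrArg (fun x => x.2.2.2) hTz) w

end SMCb

namespace SMCd
variable {n : ℕ}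

lemma pad_sum {K k : ℕ} (hk : k ≤ K) (g : Fin k → ℝ) :
    (∑ j : Fin K, if h : (j : ℕ) < k then g ⟨j, h⟩ else 0) = ∑ i : Fin k, g i := by
  have h1 : (∑ j : Fin K, if h : (j : ℕ) < k then g ⟨j, h⟩ else 0)
      = ∑ j ∈ Finset.range K, (if h : j < k then g ⟨j, h⟩ else 0) :=
    Fin.sum_univ_eq_sum_range (fun j => if h : j < k then g ⟨j, h⟩ else 0) K
  have h2 : (∑ i : Fin k, g i)
      = ∑ j ∈ Finset.range k, (if h : j < k then g ⟨j, h⟩ else 0) := by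
    rw [← Fin.sum_univ_eq_sum_range (fun j => if h : j < k then g ⟨j, h⟩ else 0) k]
    apply Finset.sum_congr rfl
    intro i _
    rw [dif_pos i.isLt]
  rw [h1, h2]
  apply (Finset.sum_subset (Finset.range_subset_range.2 hk) ?_).symm
  intro x _ hx
  rw [dif_neg (by simpa using hx)]

/-- the doubled matrix -/
noncomputable def hat (μ : Fin n → Fin n → ℝ) : Matrix (Fin n ⊕ Fin n) (Fin n ⊕ Fin n) ℝ :=
  fun i j => match i, j with
  | Sum.inl m, Sum.inl w => μ m w
  | Sum.inl m, Sum.inr w => if m = w then 1 - ∑ w', μ m w' else 0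
  | Sum.inr j', Sum.inl w => if j' = w then 1 - ∑ m', μ m' w else 0
  | Sum.inr j', Sum.inr w' => μ w' j'

lemma hat_mem (μ : Fin n → Fin n → ℝ) (hμ : IsFrac μ) :
    hat μ ∈ doublyStochastic ℝ (Fin n ⊕ Fin n) := by
  obtain ⟨h0, hr, hc⟩ := hμ
  rw [mem_doublyStochastic_iff_sum]
  refine ⟨?_, ?_, ?_⟩
  · rintro (m | j') (w | w')
    · exact h0 m w
    · dsimp [hat]; split
      · linarith [hr m]
      · exact le_rfl
    · dsimp [hat]; split
      · linarith [hc w]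
      · exact le_rfl
    · exact h0 w' j'
  · rintro (m | j')
    · rw [Fintype.sum_sum_type]
      have h1 : ∑ w : Fin n, hat μ (Sum.inl m) (Sum.inl w) = ∑ w, μ m w := rfl
      have h2 : ∑ w : Fin n, hat μ (Sum.inl m) (Sum.inr w) = 1 - ∑ w', μ m w' := by
        rw [show (fun w => hat μ (Sum.inl m) (Sum.inr w)) = fun w => if m = w then 1 - ∑ w', μ m w' else 0 from rfl]
        rw [Finset.sum_ite_eq]
        simp
      rw [h1, h2]; ring
    · rw [Fintype.sum_sum_type]
      have h1 : ∑ w : Fin n, hat μ (Sum.inr j') (Sum.inl w) = 1 - ∑ m', μ m' j' := by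
        rw [show (fun w => hat μ (Sum.inr j') (Sum.inl w)) = fun w => if j' = w then 1 - ∑ m', μ m' w else 0 from rfl]
        rw [Finset.sum_ite_eq]
        simp
      have h2 : ∑ w' : Fin n, hat μ (Sum.inr j') (Sum.inr w') = ∑ w', μ w' j' := rfl
      rw [h1, h2]; ring
  · rintro (w | w')
    · rw [Fintype.sum_sum_type]
      have h1 : ∑ m : Fin n, hat μ (Sum.inl m) (Sum.inl w) = ∑ m, μ m w := rfl
      have h2 : ∑ j' : Fin n, hat μ (Sum.inr j') (Sum.inl w) = 1 - ∑ m', μ m' w := by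
        rw [show (fun j' => hat μ (Sum.inr j') (Sum.inl w)) = fun j' => if j' = w then 1 - ∑ m', μ m' w else 0 from rfl]
        rw [Finset.sum_ite_eq']
        simp
      rw [h1, h2]; ring
    · rw [Fintype.sum_sum_type]
      have h1 : ∑ m : Fin n, hat μ (Sum.inl m) (Sum.inr w') = 1 - ∑ x, μ w' x := by
        rw [show (fun m => hat μ (Sum.inl m) (Sum.inr w')) = fun m => if m = w' then 1 - ∑ x, μ m x else 0 from rfl]
        rw [Finset.sum_ite_eq']
        simp
      have h2 : ∑ j' : Fin n, hat μ (Sum.inr j') (Sum.inr w') = ∑ x, μ w' x := rfl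
      rw [h1, h2]; ring

/-- top-left block of a permutation of `Fin n ⊕ Fin n` -/
noncomputable def blk (σ : Equiv.Perm (Fin n ⊕ Fin n)) : Fin n → Fin n → ℝ :=
  fun m w => if σ (Sum.inl m) = Sum.inl w then 1 else 0

lemma blk_int (σ : Equiv.Perm (Fin n ⊕ Fin n)) : IsIntegralM (blk σ) := by
  intro m w
  rw [blk]
  split
  · right; rfl
  · left; rfl

lemma blk_frac (σ : Equiv.Perm (Fin n ⊕ Fin n)) : IsFrac (blk σ) := by
  refine ⟨fun m w => by rw [blk]; split <;> norm_num, fun m => ?_, fun w => ?_⟩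
  · rcases hx : σ (Sum.inl m) with w0 | w0
    · rw [show (∑ w, blk σ m w) = ∑ w, if w0 = w then (1:ℝ) else 0 by
        apply Finset.sum_congr rfl; intro w _; rw [blk, hx]; simp]
      rw [Finset.sum_ite_eq]; simp
    · rw [show (∑ w, blk σ m w) = 0 by
        apply Finset.sum_eq_zero; intro w _; rw [blk, hx]; simp]
      norm_num
  · have hcond : ∀ m : Fin n, (blk σ m w) = if Sum.inl m = σ.symm (Sum.inl w) then (1:ℝ) else 0 := by
      intro m
      rw [blk]
      congr 1
      apply propext
      constructor
      · intro h; rw [← h, Equiv.symm_apply_apply]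
      · intro h; rw [h, Equiv.apply_symm_apply]
    rcases hy : σ.symm (Sum.inl w) with m0 | m0
    · calc ∑ m, blk σ m w = ∑ m, if m = m0 then (1:ℝ) else 0 := by
            apply Finset.sum_congr rfl; intro m _; rw [hcond, hy]; simp [Sum.inl.injEq]
        _ ≤ 1 := by rw [Finset.sum_ite_eq']; simp
    · calc ∑ m, blk σ m w = 0 := by
            apply Finset.sum_eq_zero; intro m _; rw [hcond, hy]; simp
        _ ≤ 1 := by norm_num

lemma permMatrix_entry (σ : Equiv.Perm (Fin n ⊕ Fin n)) (i j : Fin n ⊕ Fin n) :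
    (σ.permMatrix ℝ) i j = if σ i = j then 1 else 0 := by
  simp only [Equiv.Perm.permMatrix, PEquiv.toMatrix_apply, Equiv.toPEquiv_apply, Option.mem_def,
    Option.some.injEq]

theorem decomp (hn : 0 < n) (μ : Fin n → Fin n → ℝ) (hμ : IsFrac μ)
    (S : Finset (Fin n × Fin n)) (hSsupp : ∀ m w, (m, w) ∉ S → μ m w = 0)
    (hcard : S.card < 4 * n) :
    ∃ (k : ℕ), k ≤ 4 * n ∧ ∃ (lam : Fin k → ℝ) (ν : Fin k → Fin n → Fin n → ℝ),
      (∀ j, 0 ≤ lam j) ∧ (∑ j, lam j = 1) ∧ (∀ j, IsIntegralM (ν j) ∧ IsFrac (ν j)) ∧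
      ∀ m w, μ m w = ∑ j, lam j * ν j m w := by
  classical
  obtain ⟨wp, hwp0, hwp1, hwps⟩ := exists_eq_sum_perm_of_mem_doublyStochastic (hat_mem μ hμ)
  have hpoint : ∀ m w, μ m w = ∑ σ : Equiv.Perm (Fin n ⊕ Fin n), wp σ * blk σ m w := by
    intro m w
    have h1 := congrFun (congrFun (congrArg (fun M => (M : Matrix _ _ ℝ)) hwps) (Sum.inl m)) (Sum.inl w)
    rw [Matrix.sum_apply] at h1
    have h2 : ∀ σ : Equiv.Perm (Fin n ⊕ Fin n),
        (wp σ • σ.permMatrix ℝ) (Sum.inl m) (Sum.inl w) = wp σ * blk σ m w := by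
      intro σ
      rw [Matrix.smul_apply, permMatrix_entry, blk, smul_eq_mul]
    rw [Finset.sum_congr rfl (fun σ _ => h2 σ)] at h1
    exact h1.symm
  set D : Set (Fin n → Fin n → ℝ) :=
    {ν | (IsIntegralM ν ∧ IsFrac ν) ∧ ∀ m w, (m, w) ∉ S → ν m w = 0} with hD
  set t : Finset (Equiv.Perm (Fin n ⊕ Fin n)) := univ.filter (fun σ => wp σ ≠ 0) with ht
  have hsum_t : ∑ σ ∈ t, wp σ = 1 := by
    rw [ht, Finset.sum_filter_ne_zero]
    exact hwp1
  have hblkD : ∀ σ ∈ t, blk σ ∈ D := by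
    intro σ hσ
    refine ⟨⟨blk_int σ, blk_frac σ⟩, ?_⟩
    intro m w hmw
    have h0 : (0:ℝ) = ∑ σ' : Equiv.Perm (Fin n ⊕ Fin n), wp σ' * blk σ' m w := by
      rw [← hpoint m w]
      exact (hSsupp m w hmw).symm
    have hterm : ∀ σ' ∈ (univ : Finset (Equiv.Perm (Fin n ⊕ Fin n))), 0 ≤ wp σ' * blk σ' m w :=
      fun σ' _ => mul_nonneg (hwp0 σ') ((blk_frac σ').1 m w)
    have := (Finset.sum_eq_zero_iff_of_nonneg hterm).1 h0.symm σ (mem_univ σ)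
    have hwσ : wp σ ≠ 0 := (Finset.mem_filter.1 hσ).2
    rcases mul_eq_zero.1 this with h | h
    · exact absurd h hwσ
    · exact h
  have hμmem : μ ∈ convexHull ℝ D := by
    have hcm : t.centerMass wp blk = μ := by
      rw [Finset.centerMass_eq_of_sum_1 _ _ hsum_t]
      funext m
      funext w
      rw [Finset.sum_apply, Finset.sum_apply]
      calc ∑ σ ∈ t, (wp σ • blk σ) m w
          = ∑ σ ∈ t, wp σ * blk σ m w := Finset.sum_congr rfl (fun σ _ => rfl)
        _ = ∑ σ : Equiv.Perm (Fin n ⊕ Fin n), wp σ * blk σ m w := by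
            apply Finset.sum_subset (Finset.filter_subset _ _)
            intro σ _ hσ
            have hz : wp σ = 0 := by
              by_contra hne
              exact hσ (Finset.mem_filter.2 ⟨mem_univ σ, hne⟩)
            rw [hz, zero_mul]
        _ = μ m w := (hpoint m w).symm
    rw [← hcm]
    exact Finset.centerMass_mem_convexHull t (fun σ _ => hwp0 σ) (by rw [hsum_t]; norm_num) hblkD
  -- Caratheodory
  rw [convexHull_eq_union] at hμmem
  simp only [Set.mem_iUnion] at hμmem
  obtain ⟨t', hsub, hai, hmem⟩ := hμmem
  have htne : t'.Nonempty := by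
    rcases t'.eq_empty_or_nonempty with rfl | h
    · simp at hmem
    · exact h
  have hcardt' : t'.card ≤ 4 * n := by
    set Vs : Submodule ℝ (Fin n → Fin n → ℝ) :=
      { carrier := {f | ∀ m w, (m, w) ∉ S → f m w = 0}
        add_mem' := by intro a b ha hb m w h; simp only [Pi.add_apply]; rw [ha m w h, hb m w h]; ring
        zero_mem' := by intro m w h; rfl
        smul_mem' := by intro c a ha m w h; simp only [Pi.smul_apply, smul_eq_mul]; rw [ha m w h]; ring } with hVs
    have hVsrank : Module.finrank ℝ ↥Vs ≤ S.card := by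
      set r : ↥Vs →ₗ[ℝ] (↥S → ℝ) :=
        { toFun := fun f p => (f : Fin n → Fin n → ℝ) p.1.1 p.1.2
          map_add' := by intro a b; rfl
          map_smul' := by intro c a; rfl } with hr
      have hinj : Function.Injective r := by
        intro a b hab
        apply Subtype.ext
        funext m w
        by_cases h : ((m, w) : Fin n × Fin n) ∈ S
        · exact congrFun hab ⟨(m, w), h⟩
        · rw [a.2 m w h, b.2 m w h]
      have hle := LinearMap.finrank_le_finrank_of_injective hinj
      rwa [Module.finrank_pi, Fintype.card_coe] at hle
    have hspan : vectorSpan ℝ (Set.range (Subtype.val : ↥t' → (Fin n → Fin n → ℝ))) ≤ Vs := by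
      rw [vectorSpan_def]
      apply Submodule.span_le.2
      rintro x hx
      rw [Set.mem_vsub] at hx
      obtain ⟨a, ha, b, hb, rfl⟩ := hx
      rw [Subtype.range_coe] at ha hb
      have haD : a ∈ D := hsub ha
      have hbD : b ∈ D := hsub hb
      intro m w h
      show a m w - b m w = 0
      rw [haD.2 m w h, hbD.2 m w h, sub_zero]
    have h1 : 1 ≤ t'.card := Finset.card_pos.2 htne
    have hfr := hai.finrank_vectorSpan (n := t'.card - 1)
      (by rw [Fintype.card_coe]; omega)
    have hmono : Module.finrank ℝ ↥(vectorSpan ℝ (Set.range (Subtype.val : ↥t' → (Fin n → Fin n → ℝ))))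
        ≤ Module.finrank ℝ ↥Vs := Submodule.finrank_mono hspan
    rw [hfr] at hmono
    omega
  rw [Finset.convexHull_eq] at hmem
  obtain ⟨wt, hwt0, hwt1, hcm2⟩ := hmem
  have hcm' : ∀ m w, μ m w = ∑ y ∈ t', wt y * y m w := by
    intro m w
    have h1 : t'.centerMass wt id = μ := hcm2
    rw [Finset.centerMass_eq_of_sum_1 _ _ hwt1] at h1
    have h2 := congrFun (congrFun h1 m) w
    rw [← h2, Finset.sum_apply, Finset.sum_apply]
    exact Finset.sum_congr rfl (fun y _ => rfl)
  -- packaging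
  refine ⟨4 * n, le_rfl, ?_⟩
  set c := t'.card with hc
  set f : Fin c → (Fin n → Fin n → ℝ) := fun i => ((t'.equivFin.symm i : ↥t') : Fin n → Fin n → ℝ) with hf
  have hfmem : ∀ i, f i ∈ t' := fun i => (t'.equivFin.symm i).2
  set lam : Fin (4 * n) → ℝ := fun j => if h : (j : ℕ) < c then wt (f ⟨j, h⟩) else 0 with hlam
  set nu : Fin (4 * n) → Fin n → Fin n → ℝ := fun j => if h : (j : ℕ) < c then f ⟨j, h⟩ else 0 with hnu
  have hlamj : ∀ j, lam j = if h : (j : ℕ) < c then wt (f ⟨j, h⟩) else 0 := fun j => rfl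
  have hnuj : ∀ j, nu j = if h : (j : ℕ) < c then f ⟨j, h⟩ else 0 := fun j => rfl
  refine ⟨lam, nu, ?_, ?_, ?_, ?_⟩
  · intro j
    rw [hlamj]
    by_cases h : (j : ℕ) < c
    · rw [dif_pos h]; exact hwt0 _ (hfmem _)
    · rw [dif_neg h]
  · rw [Finset.sum_congr rfl (fun j _ => hlamj j), pad_sum hcardt' (fun i => wt (f i))]
    have he : ∑ i : Fin c, wt (f i) = ∑ x : ↥t', wt ↑x :=
      Equiv.sum_comp t'.equivFin.symm (fun (x : ↥t') => wt ↑x)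
    rw [he, Finset.sum_coe_sort t' wt]
    exact hwt1
  · intro j
    rw [hnuj]
    by_cases h : (j : ℕ) < c
    · rw [dif_pos h]
      exact (hsub (hfmem ⟨j, h⟩)).1
    · rw [dif_neg h]
      refine ⟨fun m w => Or.inl rfl, ⟨fun m w => le_rfl, fun m => by simp, fun w => by simp⟩⟩
  · intro m w
    rw [hcm' m w]
    have hstep : ∀ j : Fin (4 * n), lam j * nu j m w
        = if h : (j : ℕ) < c then wt (f ⟨j, h⟩) * f ⟨j, h⟩ m w else 0 := by
      intro j
      rw [hlamj, hnuj]
      by_cases h : (j : ℕ) < c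
      · rw [dif_pos h, dif_pos h, dif_pos h]
      · rw [dif_neg h, dif_neg h, dif_neg h, zero_mul]
    rw [Finset.sum_congr rfl (fun j _ => hstep j),
      pad_sum hcardt' (fun i => wt (f i) * f i m w)]
    have he : ∑ i : Fin c, wt (f i) * f i m w = ∑ x : ↥t', wt ↑x * (x : Fin n → Fin n → ℝ) m w :=
      Equiv.sum_comp t'.equivFin.symm (fun (x : ↥t') => wt ↑x * (x : Fin n → Fin n → ℝ) m w)
    rw [he, Finset.sum_coe_sort t' (fun y => wt y * y m w)]

end SMCd

namespace SMC
variable {n : ℕ}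

section pick
/-- pick the key-maximal element of `s`, with a default fallback. -/
noncomputable def pick (hn : 0 < n) (key : Fin n → ℝ ×ₗ Fin n) (s : Finset (Fin n)) : Fin n :=
  if h : s.Nonempty then (s.exists_max_image key h).choose else ⟨0, hn⟩

lemma pick_mem (hn : 0 < n) (key : Fin n → ℝ ×ₗ Fin n) {s : Finset (Fin n)} (h : s.Nonempty) :
    pick hn key s ∈ s := by
  rw [pick, dif_pos h]
  exact (s.exists_max_image key h).choose_spec.1

lemma pick_le (hn : 0 < n) (key : Fin n → ℝ ×ₗ Fin n) {s : Finset (Fin n)} (h : s.Nonempty)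
    {x : Fin n} (hx : x ∈ s) : key x ≤ key (pick hn key s) := by
  rw [pick, dif_pos h]
  exact (s.exists_max_image key h).choose_spec.2 x hx
end pick

variable (hn : 0 < n) (U V : Fin n → Fin n → ℝ)

/-- man `m`'s key for woman `w` -/
noncomputable def keyM (m w : Fin n) : ℝ ×ₗ Fin n := toLex (U m w, w)
/-- woman `w`'s key for man `m` -/
noncomputable def keyW (w m : Fin n) : ℝ ×ₗ Fin n := toLex (V m w, m)

lemma keyM_inj (m : Fin n) : Function.Injective (keyM U m) := by
  intro a b h
  have := congrArg (fun x => (ofLex x).2) h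
  simpa [keyM] using this

lemma keyW_inj (w : Fin n) : Function.Injective (keyW V w) := by
  intro a b h
  have := congrArg (fun x => (ofLex x).2) h
  simpa [keyW] using this

/-- current proposal of man `m` given rejection sets `R` -/
noncomputable def prop (R : Fin n → Finset (Fin n)) (m : Fin n) : Fin n :=
  pick hn (keyM U m) (univ \ R m)

/-- suitors of woman `w` -/
noncomputable def suit (R : Fin n → Finset (Fin n)) (w : Fin n) : Finset (Fin n) :=
  univ.filter fun m' => prop hn U R m' = w

/-- the suitor that `w` (tentatively) accepts -/
noncomputable def acc (R : Fin n → Finset (Fin n)) (w : Fin n) : Fin n :=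
  pick hn (keyW V w) (suit hn U R w)

noncomputable def step (R : Fin n → Finset (Fin n)) : Fin n → Finset (Fin n) :=
  fun m => if acc hn U V R (prop hn U R m) = m then R m else insert (prop hn U R m) (R m)

def Good (R : Fin n → Finset (Fin n)) : Prop :=
  (∀ m, (univ \ R m).Nonempty) ∧
  ∀ m w, w ∈ R m → ∃ m', prop hn U R m' = w ∧ keyW V w m < keyW V w m'

variable {hn U V}

lemma mem_suit {R : Fin n → Finset (Fin n)} {m w : Fin n} :
    m ∈ suit hn U R w ↔ prop hn U R m = w := by simp [suit]

lemma suit_self_nonempty (R : Fin n → Finset (Fin n)) (m : Fin n) :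
    (suit hn U R (prop hn U R m)).Nonempty :=
  ⟨m, mem_suit.2 rfl⟩

lemma acc_prop {R : Fin n → Finset (Fin n)} {w : Fin n} (h : (suit hn U R w).Nonempty) :
    prop hn U R (acc hn U V R w) = w :=
  mem_suit.1 (pick_mem hn (keyW V w) h)

lemma acc_le {R : Fin n → Finset (Fin n)} {w m : Fin n} (h : (suit hn U R w).Nonempty)
    (hm : prop hn U R m = w) : keyW V w m ≤ keyW V w (acc hn U V R w) :=
  pick_le hn (keyW V w) h (mem_suit.2 hm)

/-- an accepted man's situation does not change in one step -/
lemma prop_step_acc {R : Fin n → Finset (Fin n)} {w : Fin n} (h : (suit hn U R w).Nonempty) :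
    prop hn U (step hn U V R) (acc hn U V R w) = w := by
  have h1 : prop hn U R (acc hn U V R w) = w := acc_prop h
  have h2 : step hn U V R (acc hn U V R w) = R (acc hn U V R w) := by
    rw [step, h1, if_pos rfl]
  rw [prop, h2, ← prop, h1]

lemma good_step {R : Fin n → Finset (Fin n)} (hR : Good hn U V R) : Good hn U V (step hn U V R) := by
  classical
  obtain ⟨h1, h2⟩ := hR
  -- auxiliary: for any w that is in some new rejection set together with a witness
  have key : ∀ m w, w ∈ step hn U V R m →
      ∃ m', prop hn U (step hn U V R) m' = w ∧ keyW V w m < keyW V w m' := by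
    intro m w hw
    by_cases hmem : w ∈ R m
    · obtain ⟨m', hm', hk⟩ := h2 m w hmem
      have hne : (suit hn U R w).Nonempty := ⟨m', mem_suit.2 hm'⟩
      refine ⟨acc hn U V R w, prop_step_acc hne, lt_of_lt_of_le hk (acc_le hne hm')⟩
    · -- w was just inserted: m was rejected and w = prop R m
      rw [step] at hw
      by_cases hacc : acc hn U V R (prop hn U R m) = m
      · rw [if_pos hacc] at hw; exact absurd hw hmem
      · rw [if_neg hacc] at hw
        rcases Finset.mem_insert.1 hw with rfl | hw'
        · have hne := suit_self_nonempty (hn := hn) (U := U) R m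
          refine ⟨acc hn U V R (prop hn U R m), prop_step_acc hne, ?_⟩
          have hle := acc_le (V := V) hne (m := m) rfl
          rcases lt_or_eq_of_le hle with h | h
          · exact h
          · exact absurd (keyW_inj V _ h).symm hacc
        · exact absurd hw' hmem
  refine ⟨?_, key⟩
  -- part 1 : no rejection set becomes everything
  intro m
  by_cases hacc : acc hn U V R (prop hn U R m) = m
  · rw [step]; rw [if_pos hacc]; exact h1 m
  · rw [step, if_neg hacc]
    by_contra hfull
    rw [Finset.not_nonempty_iff_eq_empty, Finset.sdiff_eq_empty_iff_subset] at hfull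
    have huniv : ∀ w : Fin n, w ∈ insert (prop hn U R m) (R m) := fun w => hfull (mem_univ w)
    -- every woman has a suitor different from m
    have hex : ∀ w : Fin n, ∃ m', prop hn U R m' = w ∧ m' ≠ m := by
      intro w
      by_cases hw : w = prop hn U R m
      · subst hw
        have hne := suit_self_nonempty (hn := hn) (U := U) R m
        exact ⟨acc hn U V R (prop hn U R m), acc_prop hne, hacc⟩
      · have hwm : w ∈ R m := by
          rcases Finset.mem_insert.1 (huniv w) with h | h
          · exact absurd h hw
          · exact h
        obtain ⟨m', hm', hk⟩ := h2 m w hwm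
        exact ⟨m', hm', fun hc => by subst hc; exact lt_irrefl _ hk⟩
    choose f hf1 hf2 using hex
    have finj : Function.Injective f := by
      intro a b hab
      rw [← hf1 a, ← hf1 b, hab]
    have fsurj := (Finite.injective_iff_surjective).1 finj
    obtain ⟨w, hw⟩ := fsurj m
    exact hf2 w hw

lemma card_le_step (R : Fin n → Finset (Fin n)) (m : Fin n) :
    (R m).card ≤ (step hn U V R m).card := by
  rw [step]
  split
  · exact le_rfl
  · exact card_le_card (Finset.subset_insert _ _)

lemma sum_lt_step {R : Fin n → Finset (Fin n)} (hR : ∀ m, (univ \ R m).Nonempty)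
    (hne : step hn U V R ≠ R) :
    (∑ m, (R m).card) < ∑ m, (step hn U V R m).card := by
  have hex : ∃ m, step hn U V R m ≠ R m := by
    by_contra h
    push_neg at h
    exact hne (funext h)
  obtain ⟨m, hm⟩ := hex
  apply Finset.sum_lt_sum (fun i _ => card_le_step R i)
  refine ⟨m, mem_univ m, ?_⟩
  rw [step] at hm ⊢
  split at hm
  · exact absurd rfl hm
  · rename_i hcond
    rw [if_neg hcond]
    have hnm : prop hn U R m ∉ R m := by
      have := pick_mem hn (keyM U m) (hR m)
      rw [← prop] at this
      exact (Finset.mem_sdiff.1 this).2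
    rw [Finset.card_insert_of_notMem hnm]
    omega

lemma sum_bound {R : Fin n → Finset (Fin n)} (hR : ∀ m, (univ \ R m).Nonempty) :
    (∑ m, (R m).card) ≤ n * (n - 1) := by
  have : ∀ m : Fin n, (R m).card ≤ n - 1 := by
    intro m
    obtain ⟨w, hw⟩ := hR m
    have : (R m).card < n := by
      have hsub : R m ⊆ univ := subset_univ _
      have hne : R m ≠ univ := by
        intro h
        rw [h] at hw
        simp at hw
      have := Finset.card_lt_card (Finset.ssubset_iff_subset_ne.2 ⟨hsub, hne⟩)
      simpa using this
    omega
  calc (∑ m, (R m).card) ≤ ∑ _m : Fin n, (n-1) := Finset.sum_le_sum (fun i _ => this i)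
    _ = n * (n-1) := by simp [mul_comm]

variable (hn U V)

noncomputable def Rs (k : ℕ) : Fin n → Finset (Fin n) := (step hn U V)^[k] (fun _ => ∅)

variable {hn U V}

lemma good_Rs (k : ℕ) : Good hn U V (Rs hn U V k) := by
  induction k with
  | zero =>
    constructor
    · intro m
      simp only [Rs, Function.iterate_zero, id]
      have : (univ : Finset (Fin n)).Nonempty := ⟨⟨0, hn⟩, mem_univ _⟩
      simpa using this
    · intro m w hw
      simp only [Rs, Function.iterate_zero, id] at hw
      exact absurd hw (Finset.notMem_empty w)
  | succ k ih =>
    rw [Rs, Function.iterate_succ_apply']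
    exact good_step ih

lemma fix_or_ge (k : ℕ) :
    step hn U V (Rs hn U V k) = Rs hn U V k ∨ k ≤ ∑ m, ((Rs hn U V k) m).card := by
  induction k with
  | zero => right; omega
  | succ k ih =>
    have hstep : Rs hn U V (k+1) = step hn U V (Rs hn U V k) := by
      rw [Rs, Function.iterate_succ_apply']; rfl
    rcases ih with hfix | hge
    · left; rw [hstep, hfix, hfix]
    · by_cases hf : step hn U V (Rs hn U V k) = Rs hn U V k
      · left; rw [hstep, hf, hf]
      · right
        rw [hstep]
        have := sum_lt_step (good_Rs (hn := hn) (U := U) (V := V) k).1 hf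
        omega

lemma final_fix : step hn U V (Rs hn U V (n*n)) = Rs hn U V (n*n) := by
  rcases fix_or_ge (hn := hn) (U := U) (V := V) (n*n) with h | h
  · exact h
  · exfalso
    have hb := sum_bound (good_Rs (hn := hn) (U := U) (V := V) (n*n)).1
    have : n * n ≤ n * (n-1) := le_trans h hb
    have h2 : n * (n-1) < n * n := by
      calc n*(n-1) < n*(n-1) + n := by omega
        _ = n * n := by rw [← Nat.mul_succ]; congr 1; omega
    omega

variable (hn U V)

noncomputable def Rstar : Fin n → Finset (Fin n) := Rs hn U V (n*n)
noncomputable def propF : Fin n → Fin n := prop hn U (Rstar hn U V)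

variable {hn U V}

lemma no_reject (m : Fin n) : acc hn U V (Rstar hn U V) (propF hn U V m) = m := by
  by_contra h
  have hfix := congrFun (final_fix (hn := hn) (U := U) (V := V)) m
  rw [step] at hfix
  rw [← Rstar] at hfix
  rw [← propF, if_neg h] at hfix
  have hnm : propF hn U V m ∉ Rstar hn U V m := by
    have hne := (good_Rs (hn := hn) (U := U) (V := V) (n*n)).1 m
    have := pick_mem hn (keyM U m) hne
    rw [← prop] at this
    exact (Finset.mem_sdiff.1 this).2
  rw [← hfix] at hnm
  exact hnm (Finset.mem_insert_self _ _)

lemma propF_inj : Function.Injective (propF hn U V) := by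
  intro a b hab
  have ha := no_reject (hn := hn) (U := U) (V := V) a
  have hb := no_reject (hn := hn) (U := U) (V := V) b
  rw [hab] at ha
  rw [← ha]; exact hb

lemma propF_bij : Function.Bijective (propF hn U V) :=
  (Finite.injective_iff_bijective).1 propF_inj

variable (hn U V)

/-- the Gale–Shapley stable matching -/
noncomputable def gsMatch : Fin n → Fin n → ℝ :=
  fun m w => if propF hn U V m = w then 1 else 0

variable {hn U V}

noncomputable def gsEquiv : Fin n ≃ Fin n := Equiv.ofBijective _ (propF_bij (hn := hn) (U := U) (V := V))

lemma propF_eq_iff (m w : Fin n) :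
    propF hn U V m = w ↔ m = (gsEquiv (hn := hn) (U := U) (V := V)).symm w := by
  rw [Equiv.eq_symm_apply]
  exact Iff.rfl

lemma gsMatch_frac : IsFrac (gsMatch hn U V) := by
  refine ⟨fun m w => by rw [gsMatch]; split <;> norm_num, fun m => ?_, fun w => ?_⟩
  · rw [show (∑ w, gsMatch hn U V m w) = ∑ w, if propF hn U V m = w then (1:ℝ) else 0 from rfl]
    rw [Finset.sum_ite_eq]
    simp
  · set e := gsEquiv (hn := hn) (U := U) (V := V)
    calc (∑ m, gsMatch hn U V m w)
        = ∑ m, if m = e.symm w then (1:ℝ) else 0 := by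
          apply Finset.sum_congr rfl
          intro m _
          rw [gsMatch]
          by_cases h : m = e.symm w
          · rw [if_pos ((propF_eq_iff m w).2 h), if_pos h]
          · rw [if_neg (fun hc => h ((propF_eq_iff m w).1 hc)), if_neg h]
      _ ≤ 1 := by rw [Finset.sum_ite_eq']; simp

lemma gs_uM (m : Fin n) : uM U (gsMatch hn U V) m = U m (propF hn U V m) := by
  rw [uM]
  rw [show (∑ w, U m w * gsMatch hn U V m w) = ∑ w, if propF hn U V m = w then U m w else 0 by
    apply Finset.sum_congr rfl; intro w _; rw [gsMatch]; split <;> ring]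
  rw [Finset.sum_ite_eq]
  simp

lemma gs_vW (w : Fin n) : vW V (gsMatch hn U V) w
    = V ((gsEquiv (hn := hn) (U := U) (V := V)).symm w) w := by
  rw [vW]
  set e := gsEquiv (hn := hn) (U := U) (V := V)
  rw [show (∑ m, V m w * gsMatch hn U V m w) = ∑ m, if m = e.symm w then V m w else 0 by
    apply Finset.sum_congr rfl; intro m _; rw [gsMatch]
    by_cases h : m = e.symm w
    · rw [if_pos ((propF_eq_iff m w).2 h), if_pos h]; ring
    · rw [if_neg (fun hc => h ((propF_eq_iff m w).1 hc)), if_neg h]; ring]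
  rw [Finset.sum_ite_eq']
  simp

lemma gsMatch_stable : IsStable U V (gsMatch hn U V) := by
  intro m w
  by_cases hle : U m w ≤ uM U (gsMatch hn U V) m
  · exact Or.inl hle
  · right
    rw [gs_uM] at hle
    push_neg at hle
    -- w has rejected m
    have hkeylt : keyM U m (propF hn U V m) < keyM U m w := by
      rw [keyM, keyM, Prod.Lex.lt_iff]
      exact Or.inl hle
    have hwR : w ∈ Rstar hn U V m := by
      by_contra hnot
      have hne := (good_Rs (hn := hn) (U := U) (V := V) (n*n)).1 m
      have hwmem : w ∈ univ \ Rstar hn U V m := Finset.mem_sdiff.2 ⟨mem_univ w, hnot⟩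
      rw [Rstar] at hwmem
      have h2 : keyM U m w ≤ keyM U m (propF hn U V m) :=
        pick_le hn (keyM U m) hne hwmem
      exact absurd h2 (not_le.2 hkeylt)
    obtain ⟨m', hm', hk⟩ := (good_Rs (hn := hn) (U := U) (V := V) (n*n)).2 m w hwR
    have hVle : V m w ≤ V m' w := by
      rw [keyW, keyW, Prod.Lex.lt_iff] at hk
      rcases hk with h | ⟨h, _⟩
      · exact le_of_lt h
      · exact le_of_eq h
    have hm'eq : m' = (gsEquiv (hn := hn) (U := U) (V := V)).symm w :=
      (propF_eq_iff m' w).1 hm' 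
    rw [gs_vW, ← hm'eq]
    exact hVle

theorem exists_stable (hn : 0 < n) (U V : Fin n → Fin n → ℝ) :
    ∃ μ : Fin n → Fin n → ℝ, IsFrac μ ∧ IsStable U V μ :=
  ⟨gsMatch hn U V, gsMatch_frac, gsMatch_stable⟩

end SMC

-- main below
theorem stmt5 {n : ℕ} (hn : 0 < n) (U V : Fin n → Fin n → ℝ)
    (hU : ∀ m w, 0 ≤ U m w) (hV : ∀ m w, 0 ≤ V m w) :
    ∃ μ : Fin n → Fin n → ℝ, IsFrac μ ∧ IsStable U V μ ∧
      (∀ μ', IsFrac μ' → IsStable U V μ' → welfare U V μ' ≤ welfare U V μ) ∧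
      (Finset.univ.filter (fun p : Fin n × Fin n => μ p.1 p.2 ≠ 0)).card ≤ 4 * n ∧
      ∃ (k : ℕ), k ≤ 4 * n ∧
        ∃ (lam : Fin k → ℝ) (ν : Fin k → Fin n → Fin n → ℝ),
          (∀ j, 0 ≤ lam j) ∧ (∑ j, lam j = 1) ∧
          (∀ j, IsIntegralM (ν j) ∧ IsFrac (ν j)) ∧
          ∀ m w, μ m w = ∑ j, lam j * ν j m w := by
  classical
  -- the set of stable fractional matchings
  set SS : Set (Fin n → Fin n → ℝ) := {μ | IsFrac μ ∧ IsStable U V μ} with hSS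
  have hne : SS.Nonempty := ⟨SMC.gsMatch hn U V, SMC.gsMatch_frac, SMC.gsMatch_stable⟩
  have hclosed : IsClosed SS := by
    have hset : SS = (⋂ m, ⋂ w, {μ : Fin n → Fin n → ℝ | 0 ≤ μ m w}) ∩
        ((⋂ m, {μ : Fin n → Fin n → ℝ | ∑ w, μ m w ≤ 1}) ∩
        ((⋂ w, {μ : Fin n → Fin n → ℝ | ∑ m, μ m w ≤ 1}) ∩
        (⋂ m, ⋂ w, ({μ : Fin n → Fin n → ℝ | U m w ≤ ∑ w', U m w' * μ m w'} ∪
          {μ : Fin n → Fin n → ℝ | V m w ≤ ∑ m', V m' w * μ m' w})))) := by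
      ext μ
      simp only [hSS, Set.mem_inter_iff, Set.mem_iInter, Set.mem_setOf_eq, Set.mem_union,
        IsFrac, IsStable, uM, vW]
      tauto
    rw [hset]
    refine IsClosed.inter ?_ (IsClosed.inter ?_ (IsClosed.inter ?_ ?_))
    · exact isClosed_iInter fun m => isClosed_iInter fun w =>
        isClosed_le continuous_const ((continuous_apply w).comp (continuous_apply m))
    · exact isClosed_iInter fun m => isClosed_le (SMCb.cont_row m) continuous_const
    · exact isClosed_iInter fun w => isClosed_le (SMCb.cont_col w) continuous_const
    · exact isClosed_iInter fun m => isClosed_iInter fun w =>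
        IsClosed.union (isClosed_le continuous_const (SMCb.cont_uM U m))
          (isClosed_le continuous_const (SMCb.cont_vW V w))
  have hboxcomp : IsCompact (Set.univ.pi fun _ : Fin n => Set.univ.pi fun _ : Fin n =>
      Set.Icc (0:ℝ) 1) :=
    isCompact_univ_pi fun _ => isCompact_univ_pi fun _ => isCompact_Icc
  have hsubbox : SS ⊆ (Set.univ.pi fun _ : Fin n => Set.univ.pi fun _ : Fin n =>
      Set.Icc (0:ℝ) 1) := by
    intro μ hμ
    rw [Set.mem_univ_pi]
    intro m
    rw [Set.mem_univ_pi]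
    intro w
    refine ⟨hμ.1.1 m w, ?_⟩
    calc μ m w ≤ ∑ w', μ m w' :=
          Finset.single_le_sum (fun i _ => hμ.1.1 m i) (mem_univ w)
      _ ≤ 1 := hμ.1.2.1 m
  have hcomp : IsCompact SS := hboxcomp.of_isClosed_subset hclosed hsubbox
  have hwc : Continuous (welfare U V) := by
    apply Continuous.add
    · exact continuous_finset_sum _ (fun m _ => SMCb.cont_uM U m)
    · exact continuous_finset_sum _ (fun w _ => SMCb.cont_vW V w)
  obtain ⟨μ0, hμ0, hmax⟩ := hcomp.exists_isMaxOn hne hwc.continuousOn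
  -- the polytope of matchings with the same utilities
  set P : Set (Fin n → Fin n → ℝ) :=
    {μ | IsFrac μ ∧ uM U μ = uM U μ0 ∧ vW V μ = vW V μ0} with hP
  have hμ0P : μ0 ∈ P := ⟨hμ0.1, rfl, rfl⟩
  have hPstable : ∀ μ ∈ P, IsStable U V μ := by
    intro μ hμ m w
    rcases hμ0.2 m w with h | h
    · left; rw [show uM U μ m = uM U μ0 m from congrFun hμ.2.1 m]; exact h
    · right; rw [show vW V μ w = vW V μ0 w from congrFun hμ.2.2 w]; exact h
  have hPwel : ∀ μ ∈ P, welfare U V μ = welfare U V μ0 := by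
    intro μ hμ
    rw [welfare, welfare,
      Finset.sum_congr rfl (fun m _ => congrFun hμ.2.1 m),
      Finset.sum_congr rfl (fun w _ => congrFun hμ.2.2 w)]
  -- minimize support cardinality over P
  set suppc : (Fin n → Fin n → ℝ) → ℕ :=
    fun μ => (univ.filter (fun p : Fin n × Fin n => μ p.1 p.2 ≠ 0)).card with hsuppc
  set Cs : Set ℕ := {c | ∃ μ, μ ∈ P ∧ suppc μ = c} with hCs
  have hCsne : Cs.Nonempty := ⟨suppc μ0, μ0, hμ0P, rfl⟩
  obtain ⟨μm, hμmP, hμmc⟩ := Nat.sInf_mem hCsne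
  have hminimal : ∀ μ' ∈ P, sInf Cs ≤ suppc μ' := fun μ' h => Nat.sInf_le ⟨μ', h, rfl⟩
  set S : Finset (Fin n × Fin n) := univ.filter (fun p : Fin n × Fin n => μm p.1 p.2 ≠ 0)
    with hSdef
  have hSsupp : ∀ m w, (m, w) ∉ S → μm m w = 0 := by
    intro m w h
    by_contra hne'
    exact h (Finset.mem_filter.2 ⟨mem_univ _, hne'⟩)
  have hμmpos : ∀ p ∈ S, 0 < μm p.1 p.2 := by
    intro p hp
    have h1 : μm p.1 p.2 ≠ 0 := (Finset.mem_filter.1 hp).2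
    exact lt_of_le_of_ne (hμmP.1.1 p.1 p.2) (Ne.symm h1)
  have hsuppc_eq : suppc μm = S.card := rfl
  -- the support bound
  have hScard : S.card < 4 * n := by
    by_contra hc
    push_neg at hc
    obtain ⟨Z, hZ0, hZsupp0, hZrow, hZcol, hZU, hZV⟩ := SMCb.exists_kernel_vec hn U V S hc
    have hZsupp : ∀ m w, (m, w) ∉ S → Z m w = 0 := hZsupp0
    -- descent: any kernel vector with a positive entry contradicts minimality
    have key : ∀ Y : Fin n → Fin n → ℝ, (∀ m w, (m, w) ∉ S → Y m w = 0) →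
        (∀ m, ∑ w, Y m w = 0) → (∀ w, ∑ m, Y m w = 0) →
        (∀ m, ∑ w, U m w * Y m w = 0) → (∀ w, ∑ m, V m w * Y m w = 0) →
        (∃ p : Fin n × Fin n, 0 < Y p.1 p.2) → False := by
      rintro Y hsupp hrow hcol hu hv ⟨p0, hp0⟩
      set Q : Finset (Fin n × Fin n) := S.filter (fun p => 0 < Y p.1 p.2) with hQ
      have hp0S : p0 ∈ S := by
        by_contra h
        rw [hsupp p0.1 p0.2 h] at hp0
        exact lt_irrefl 0 hp0
      have hQne : Q.Nonempty := ⟨p0, Finset.mem_filter.2 ⟨hp0S, hp0⟩⟩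
      obtain ⟨ps, hpsQ, hpsmin⟩ := Q.exists_min_image (fun p => μm p.1 p.2 / Y p.1 p.2) hQne
      have hpsS : ps ∈ S := (Finset.mem_filter.1 hpsQ).1
      have hpsY : 0 < Y ps.1 ps.2 := (Finset.mem_filter.1 hpsQ).2
      set tt : ℝ := μm ps.1 ps.2 / Y ps.1 ps.2 with htt
      have httpos : 0 < tt := div_pos (hμmpos ps hpsS) hpsY
      set μ' : Fin n → Fin n → ℝ := fun m w => μm m w - tt * Y m w with hμ'
      have hμ'app : ∀ m w, μ' m w = μm m w - tt * Y m w := fun m w => rfl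
      have hμ'nonneg : ∀ m w, 0 ≤ μ' m w := by
        intro m w
        rw [hμ'app]
        by_cases hmem : (m, w) ∈ S
        · by_cases hz : 0 < Y m w
          · have hq : (m, w) ∈ Q := Finset.mem_filter.2 ⟨hmem, hz⟩
            have hle := hpsmin (m, w) hq
            rw [le_div_iff₀ hz] at hle
            simp only at hle
            linarith
          · push_neg at hz
            have h0 : 0 ≤ μm m w := hμmP.1.1 m w
            nlinarith
        · rw [hsupp m w hmem, mul_zero, sub_zero]
          exact hμmP.1.1 m w
      have hμ'row : ∀ m, ∑ w, μ' m w = ∑ w, μm m w := by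
        intro m
        rw [Finset.sum_congr rfl (fun w _ => hμ'app m w), Finset.sum_sub_distrib,
          ← Finset.mul_sum, hrow, mul_zero, sub_zero]
      have hμ'col : ∀ w, ∑ m, μ' m w = ∑ m, μm m w := by
        intro w
        rw [Finset.sum_congr rfl (fun m _ => hμ'app m w), Finset.sum_sub_distrib,
          ← Finset.mul_sum, hcol, mul_zero, sub_zero]
      have hμ'u : ∀ m, uM U μ' m = uM U μm m := by
        intro m
        rw [uM, uM,
          Finset.sum_congr rfl (fun w _ => by rw [hμ'app m w]; ring_nf :
            ∀ w ∈ univ, U m w * μ' m w = U m w * μm m w - tt * (U m w * Y m w)),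
          Finset.sum_sub_distrib, ← Finset.mul_sum, hu, mul_zero, sub_zero]
      have hμ'v : ∀ w, vW V μ' w = vW V μm w := by
        intro w
        rw [vW, vW,
          Finset.sum_congr rfl (fun m _ => by rw [hμ'app m w]; ring_nf :
            ∀ m ∈ univ, V m w * μ' m w = V m w * μm m w - tt * (V m w * Y m w)),
          Finset.sum_sub_distrib, ← Finset.mul_sum, hv, mul_zero, sub_zero]
      have hμ'P : μ' ∈ P := by
        refine ⟨⟨hμ'nonneg, fun m => ?_, fun w => ?_⟩, ?_, ?_⟩
        · rw [hμ'row m]; exact hμmP.1.2.1 m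
        · rw [hμ'col w]; exact hμmP.1.2.2 w
        · funext m; rw [hμ'u m]; exact congrFun hμmP.2.1 m
        · funext w; rw [hμ'v w]; exact congrFun hμmP.2.2 w
      have hpszero : μ' ps.1 ps.2 = 0 := by
        rw [hμ'app, htt, div_mul_cancel₀ _ (ne_of_gt hpsY), sub_self]
      have hsublt : suppc μ' < suppc μm := by
        rw [hsuppc_eq]
        have hsub2 : (univ.filter (fun p : Fin n × Fin n => μ' p.1 p.2 ≠ 0)) ⊆ S.erase ps := by
          intro p hp
          have hp1 : μ' p.1 p.2 ≠ 0 := (Finset.mem_filter.1 hp).2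
          refine Finset.mem_erase.2 ⟨?_, ?_⟩
          · intro hpe
            rw [hpe] at hp1
            exact hp1 hpszero
          · by_contra hnot
            apply hp1
            rw [hμ'app, hsupp p.1 p.2 hnot, mul_zero, sub_zero]
            exact hSsupp p.1 p.2 hnot
        calc suppc μ' ≤ (S.erase ps).card := Finset.card_le_card hsub2
          _ < S.card := Finset.card_erase_lt_of_mem hpsS
      have hge := hminimal μ' hμ'P
      rw [hμmc] at hsublt
      omega
    -- apply the descent to Z or -Z
    have hZex : ∃ m w, Z m w ≠ 0 := by
      by_contra h
      push_neg at h
      exact hZ0 (funext fun m => funext fun w => h m w)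
    obtain ⟨m0, w0, hmw0⟩ := hZex
    rcases lt_or_gt_of_ne hmw0 with hneg | hpos
    · -- use -Z
      refine key (fun m w => -Z m w) ?_ ?_ ?_ ?_ ?_ ⟨(m0, w0), by simpa using hneg⟩
      · intro m w h
        show -Z m w = 0
        rw [hZsupp m w h, neg_zero]
      · intro m
        show (∑ w, -Z m w) = 0
        rw [Finset.sum_neg_distrib, hZrow, neg_zero]
      · intro w
        show (∑ m, -Z m w) = 0
        rw [Finset.sum_neg_distrib, hZcol, neg_zero]
      · intro m
        show (∑ w, U m w * -Z m w) = 0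
        simp only [mul_neg]
        rw [Finset.sum_neg_distrib, hZU, neg_zero]
      · intro w
        show (∑ m, V m w * -Z m w) = 0
        simp only [mul_neg]
        rw [Finset.sum_neg_distrib, hZV, neg_zero]
    · exact key Z hZsupp hZrow hZcol hZU hZV ⟨(m0, w0), hpos⟩
  -- decomposition
  obtain ⟨k, hk, lam, ν, h1, h2, h3, h4⟩ := SMCd.decomp hn μm hμmP.1 S hSsupp hScard
  refine ⟨μm, hμmP.1, hPstable μm hμmP, ?_, ?_, k, hk, lam, ν, h1, h2, h3, h4⟩
  · intro μ' hf hs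
    have hle : welfare U V μ' ≤ welfare U V μ0 := hmax (Set.mem_setOf_eq ▸ ⟨hf, hs⟩)
    rw [hPwel μm hμmP]
    exact hle
  · exact le_of_lt hScard
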